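/- Let (u,τ,S) be a twice continuously differentiable solution of the full compressible Euler equations τ_t − u_x = 0, u_t + p_x = 0, S_t = 0 (p = K e^{S/c_v} τ^{−γ}) on an open subset of ℝ×ℝ with τ > 0. Then the gradient variables satisfy the Riccati equations α_t + c·α_x = k₁·(k₂·(3α + β) + αβ − α²) and β_t − c·β_x = k₁·(−k₂·(α + 3β) + αβ − β²) at every point, where k₁ = ((γ+1)K_c/(2(γ−1)))·η^{2/(γ−1)} and k₂ = ((γ−1)/(γ(γ+1)))·η·m_x. -/

import Mathlib

open Real Set MeasureTheory

noncomputable section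

/-- Partial derivative in the spatial variable `x`. -/
def pdx (f : ℝ → ℝ → ℝ) (x t : ℝ) : ℝ := deriv (fun y => f y t) x

/-- Partial derivative in the time variable `t`. -/
def pdt (f : ℝ → ℝ → ℝ) (x t : ℝ) : ℝ := deriv (fun s => f x s) t

/-- The time strip `ℝ × [0, T)`, where `T` is a real number or `+∞`. -/
def strip (T : EReal) : Set (ℝ × ℝ) := {p : ℝ × ℝ | 0 ≤ p.2 ∧ (p.2 : EReal) < T}

/-- `η = (2√(Kγ)/(γ−1)) τ^{−(γ−1)/2}`. -/
def etaP (K γ : ℝ) (τ : ℝ → ℝ → ℝ) (x t : ℝ) : ℝ :=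
  2 * Real.sqrt (K * γ) / (γ - 1) * τ x t ^ (-(γ - 1) / 2)

/-- Gradient variable `α = s_x = u_x + η_x` for the p-system. -/
def alphaP (K γ : ℝ) (u τ : ℝ → ℝ → ℝ) (x t : ℝ) : ℝ :=
  pdx u x t + pdx (etaP K γ τ) x t

/-- Gradient variable `β = r_x = u_x − η_x` for the p-system. -/
def betaP (K γ : ℝ) (u τ : ℝ → ℝ → ℝ) (x t : ℝ) : ℝ :=
  pdx u x t - pdx (etaP K γ τ) x t

/-- The p-system `τ_t − u_x = 0`, `u_t + p_x = 0` with `p = K τ^{−γ}`, at the point `(x,t)`. -/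
def pSystem (K γ : ℝ) (u τ : ℝ → ℝ → ℝ) (x t : ℝ) : Prop :=
  pdt τ x t - pdx u x t = 0 ∧
  pdt u x t + pdx (fun y s => K * τ y s ^ (-γ)) x t = 0

/-- Riemann invariant `s = u + η`. -/
def sRi (K γ : ℝ) (u τ : ℝ → ℝ → ℝ) (x t : ℝ) : ℝ := u x t + etaP K γ τ x t

/-- Riemann invariant `r = u − η`. -/
def rRi (K γ : ℝ) (u τ : ℝ → ℝ → ℝ) (x t : ℝ) : ℝ := u x t - etaP K γ τ x t

/-- The Lagrangian wave speed `c = √(Kγ) τ^{−(γ+1)/2}`. -/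
def cP (K γ : ℝ) (τ : ℝ → ℝ → ℝ) (x t : ℝ) : ℝ :=
  Real.sqrt (K * γ) * τ x t ^ (-(γ + 1) / 2)

/-- The constant `K_τ = (2√(Kγ)/(γ−1))^{2/(γ−1)}`. -/
def KtauC (K γ : ℝ) : ℝ := (2 * Real.sqrt (K * γ) / (γ - 1)) ^ (2 / (γ - 1))

/-- The constant `K_c = √(Kγ) K_τ^{−(γ+1)/2}`. -/
def KcC (K γ : ℝ) : ℝ := Real.sqrt (K * γ) * KtauC K γ ^ (-(γ + 1) / 2)

/-- `k₁ = ((γ+1)K_c/(2(γ−1))) η^{2/(γ−1)}`. -/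
def k1P (K γ : ℝ) (τ : ℝ → ℝ → ℝ) (x t : ℝ) : ℝ :=
  (γ + 1) * KcC K γ / (2 * (γ - 1)) * etaP K γ τ x t ^ (2 / (γ - 1))
/-- `m = e^{S/(2c_v)}`. -/
def mF (cv : ℝ) (S : ℝ → ℝ → ℝ) (x t : ℝ) : ℝ := Real.exp (S x t / (2 * cv))

/-- The ideal polytropic pressure `p = K e^{S/c_v} τ^{−γ}`. -/
def pF (K cv γ : ℝ) (τ S : ℝ → ℝ → ℝ) (x t : ℝ) : ℝ :=
  K * Real.exp (S x t / cv) * τ x t ^ (-γ)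

/-- The full compressible Euler equations `τ_t − u_x = 0`, `u_t + p_x = 0`, `S_t = 0`
with `p = K e^{S/c_v} τ^{−γ}`, at the point `(x,t)`. -/
def fullEuler (K cv γ : ℝ) (u τ S : ℝ → ℝ → ℝ) (x t : ℝ) : Prop :=
  pdt τ x t - pdx u x t = 0 ∧
  pdt u x t + pdx (pF K cv γ τ S) x t = 0 ∧
  pdt S x t = 0

/-- Wave speed `c = K_c m η^{(γ+1)/(γ−1)}` for the full Euler equations. -/
def cF (K cv γ : ℝ) (τ S : ℝ → ℝ → ℝ) (x t : ℝ) : ℝ :=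
  KcC K γ * mF cv S x t * etaP K γ τ x t ^ ((γ + 1) / (γ - 1))

/-- Gradient variable `α = u_x + m η_x + ((γ−1)/γ) m_x η` for the full Euler equations. -/
def alphaF (K cv γ : ℝ) (u τ S : ℝ → ℝ → ℝ) (x t : ℝ) : ℝ :=
  pdx u x t + mF cv S x t * pdx (etaP K γ τ) x t
    + (γ - 1) / γ * pdx (mF cv S) x t * etaP K γ τ x t

/-- Gradient variable `β = u_x − m η_x − ((γ−1)/γ) m_x η` for the full Euler equations. -/
def betaF (K cv γ : ℝ) (u τ S : ℝ → ℝ → ℝ) (x t : ℝ) : ℝ :=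
  pdx u x t - mF cv S x t * pdx (etaP K γ τ) x t
    - (γ - 1) / γ * pdx (mF cv S) x t * etaP K γ τ x t

/-- `k₂ = ((γ−1)/(γ(γ+1))) η m_x`. -/
def k2F (K cv γ : ℝ) (τ S : ℝ → ℝ → ℝ) (x t : ℝ) : ℝ :=
  (γ - 1) / (γ * (γ + 1)) * etaP K γ τ x t * pdx (mF cv S) x t

/-- Weighted gradient variable `α_ε = η^{2ε/(γ−1)} α`. -/
def aeps (K cv γ ε : ℝ) (u τ S : ℝ → ℝ → ℝ) (x t : ℝ) : ℝ :=
  etaP K γ τ x t ^ (2 * ε / (γ - 1)) * alphaF K cv γ u τ S x t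

/-- Weighted gradient variable `β_ε = η^{2ε/(γ−1)} β`. -/
def beps (K cv γ ε : ℝ) (u τ S : ℝ → ℝ → ℝ) (x t : ℝ) : ℝ :=
  etaP K γ τ x t ^ (2 * ε / (γ - 1)) * betaF K cv γ u τ S x t

/-- `k_{1ε} = ((γ+1)K_c/(2(γ−1))) η^{(2/(γ−1))(1−ε)}`. -/
def k1e (K γ ε : ℝ) (τ : ℝ → ℝ → ℝ) (x t : ℝ) : ℝ :=
  (γ + 1) * KcC K γ / (2 * (γ - 1)) * etaP K γ τ x t ^ (2 / (γ - 1) * (1 - ε))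

/-- `k_{2ε} = ((γ−1)/(γ(γ+1))) η^{1+2ε/(γ−1)} m_x`. -/
def k2e (K cv γ ε : ℝ) (τ S : ℝ → ℝ → ℝ) (x t : ℝ) : ℝ :=
  (γ - 1) / (γ * (γ + 1)) * etaP K γ τ x t ^ (1 + 2 * ε / (γ - 1)) * pdx (mF cv S) x t

/-! ### Auxiliary calculus lemmas -/

lemma hasDerivAt_sx {F : ℝ × ℝ → ℝ} {p : ℝ × ℝ} (h : DifferentiableAt ℝ F p) :
    HasDerivAt (fun y => F (y, p.2)) (fderiv ℝ F p (1, 0)) p.1 := by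
  have hl : HasDerivAt (fun y : ℝ => ((y, p.2) : ℝ × ℝ)) ((1 : ℝ), (0 : ℝ)) p.1 :=
    (hasDerivAt_id p.1).prodMk (hasDerivAt_const p.1 p.2)
  exact h.hasFDerivAt.comp_hasDerivAt p.1 (by simpa using hl)

lemma hasDerivAt_st {F : ℝ × ℝ → ℝ} {p : ℝ × ℝ} (h : DifferentiableAt ℝ F p) :
    HasDerivAt (fun s => F (p.1, s)) (fderiv ℝ F p (0, 1)) p.2 := by
  have hl : HasDerivAt (fun s : ℝ => ((p.1, s) : ℝ × ℝ)) ((0 : ℝ), (1 : ℝ)) p.2 :=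
    (hasDerivAt_const p.2 p.1).prodMk (hasDerivAt_id p.2)
  exact h.hasFDerivAt.comp_hasDerivAt p.2 (by simpa using hl)

lemma hasDerivAt_pdx {f : ℝ → ℝ → ℝ} {x t : ℝ}
    (h : DifferentiableAt ℝ (fun q : ℝ × ℝ => f q.1 q.2) (x, t)) :
    HasDerivAt (fun y => f y t) (pdx f x t) x :=
  (hasDerivAt_sx (p := (x, t)) h).differentiableAt.hasDerivAt

lemma hasDerivAt_pdt {f : ℝ → ℝ → ℝ} {x t : ℝ}
    (h : DifferentiableAt ℝ (fun q : ℝ × ℝ => f q.1 q.2) (x, t)) :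
    HasDerivAt (fun s => f x s) (pdt f x t) t :=
  (hasDerivAt_st (p := (x, t)) h).differentiableAt.hasDerivAt

/-- Master lemma: mixed and pure second partials of a `C²` function, with symmetry. -/
lemma master_second_deriv {f : ℝ → ℝ → ℝ} {V : Set (ℝ × ℝ)} (hV : IsOpen V) {x t : ℝ}
    (hp : (x, t) ∈ V) (hf : ContDiffOn ℝ 2 (fun q : ℝ × ℝ => f q.1 q.2) V) :
    ∃ fxx fxt : ℝ,
      HasDerivAt (fun y => pdx f y t) fxx x ∧
      HasDerivAt (fun s => pdx f x s) fxt t ∧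
      HasDerivAt (fun y => pdt f y t) fxt x := by
  set F : ℝ × ℝ → ℝ := fun q => f q.1 q.2 with hF
  have hdiff : ∀ q ∈ V, DifferentiableAt ℝ F q := fun q hq =>
    (hf.contDiffAt (hV.mem_nhds hq)).differentiableAt (by norm_num)
  have hG : ContDiffOn ℝ 1 (fderiv ℝ F) V := hf.fderiv_of_isOpen hV (by norm_num)
  have hGdiff : DifferentiableAt ℝ (fderiv ℝ F) (x, t) :=
    (hG.contDiffAt (hV.mem_nhds hp)).differentiableAt (by norm_num)
  set G1 : ℝ × ℝ → ℝ := fun q => fderiv ℝ F q (1, 0) with hG1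
  set G2 : ℝ × ℝ → ℝ := fun q => fderiv ℝ F q (0, 1) with hG2
  have hG1d : DifferentiableAt ℝ G1 (x, t) := hGdiff.clm_apply (differentiableAt_const _)
  have hG2d : DifferentiableAt ℝ G2 (x, t) := hGdiff.clm_apply (differentiableAt_const _)
  have hevx : ∀ᶠ y in nhds x, (y, t) ∈ V := by
    have hc : ContinuousAt (fun y : ℝ => ((y, t) : ℝ × ℝ)) x :=
      (continuous_id.prodMk continuous_const).continuousAt
    exact hc.preimage_mem_nhds (hV.mem_nhds hp)
  have hevt : ∀ᶠ s in nhds t, (x, s) ∈ V := by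
    have hc : ContinuousAt (fun s : ℝ => ((x, s) : ℝ × ℝ)) t :=
      (continuous_const.prodMk continuous_id).continuousAt
    exact hc.preimage_mem_nhds (hV.mem_nhds hp)
  have hpdx : ∀ q ∈ V, pdx f q.1 q.2 = G1 q := fun q hq =>
    (hasDerivAt_sx (hdiff q hq)).deriv
  have hpdt : ∀ q ∈ V, pdt f q.1 q.2 = G2 q := fun q hq =>
    (hasDerivAt_st (hdiff q hq)).deriv
  refine ⟨fderiv ℝ G1 (x, t) (1, 0), fderiv ℝ G1 (x, t) (0, 1), ?_, ?_, ?_⟩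
  · refine (hasDerivAt_sx (p := (x, t)) hG1d).congr_of_eventuallyEq ?_
    filter_upwards [hevx] with y hy using hpdx (y, t) hy
  · refine (hasDerivAt_st (p := (x, t)) hG1d).congr_of_eventuallyEq ?_
    filter_upwards [hevt] with s hs using hpdx (x, s) hs
  · have h3 : HasDerivAt (fun y => pdt f y t) (fderiv ℝ G2 (x, t) (1, 0)) x := by
      refine (hasDerivAt_sx (p := (x, t)) hG2d).congr_of_eventuallyEq ?_
      filter_upwards [hevx] with y hy using hpdt (y, t) hy
    have hsymm : IsSymmSndFDerivAt ℝ F (x, t) :=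
      (hf.contDiffAt (hV.mem_nhds hp)).isSymmSndFDerivAt (by simp)
    have e1 : fderiv ℝ G1 (x, t) (0, 1) = fderiv ℝ (fderiv ℝ F) (x, t) (0, 1) (1, 0) := by
      rw [hG1, fderiv_clm_apply hGdiff (differentiableAt_const _)]
      simp
    have e2 : fderiv ℝ G2 (x, t) (1, 0) = fderiv ℝ (fderiv ℝ F) (x, t) (1, 0) (0, 1) := by
      rw [hG2, fderiv_clm_apply hGdiff (differentiableAt_const _)]
      simp
    rw [e1, hsymm (0, 1) (1, 0), ← e2]
    exact h3

/-! ### Algebraic identities for the coefficient functions -/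

section Identities

variable {K cv γ : ℝ} {u τ S : ℝ → ℝ → ℝ} {x t : ℝ}

lemma A_pos (hK : 0 < K) (hγ : 1 < γ) : 0 < 2 * Real.sqrt (K * γ) / (γ - 1) := by
  have h1 : 0 < Real.sqrt (K * γ) := Real.sqrt_pos.2 (by positivity)
  have h2 : (0:ℝ) < γ - 1 := by linarith
  positivity

lemma eta_pos (hK : 0 < K) (hγ : 1 < γ) (hτ : 0 < τ x t) : 0 < etaP K γ τ x t := by
  have hA := A_pos (K := K) (γ := γ) hK hγ
  have h2 := Real.rpow_pos_of_pos hτ (-(γ - 1) / 2)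
  unfold etaP
  positivity

lemma cP_eq (hK : 0 < K) (hγ : 1 < γ) (hτ : 0 < τ x t) :
    cP K γ τ x t = KcC K γ * etaP K γ τ x t ^ ((γ + 1) / (γ - 1)) := by
  have hγ1 : γ - 1 ≠ 0 := by linarith
  have hA := A_pos (K := K) (γ := γ) hK hγ
  set A := 2 * Real.sqrt (K * γ) / (γ - 1) with hAdef
  have h1 : etaP K γ τ x t ^ ((γ + 1) / (γ - 1))
      = A ^ ((γ + 1) / (γ - 1)) * τ x t ^ (-(γ + 1) / 2) := by
    have he : -(γ - 1) / 2 * ((γ + 1) / (γ - 1)) = -(γ + 1) / 2 := by field_simp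
    rw [etaP, Real.mul_rpow hA.le (Real.rpow_nonneg hτ.le _), ← Real.rpow_mul hτ.le, he]
  have h2 : KcC K γ * A ^ ((γ + 1) / (γ - 1)) = Real.sqrt (K * γ) := by
    rw [KcC, KtauC, ← Real.rpow_mul hA.le, mul_assoc, ← Real.rpow_add hA]
    have he2 : 2 / (γ - 1) * (-(γ + 1) / 2) + (γ + 1) / (γ - 1) = 0 := by field_simp; ring
    rw [he2, Real.rpow_zero, mul_one]
  rw [h1, ← mul_assoc, h2, cP]

lemma cF_eq (hK : 0 < K) (hγ : 1 < γ) (hτ : 0 < τ x t) :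
    cF K cv γ τ S x t = mF cv S x t * cP K γ τ x t := by
  rw [cF, cP_eq hK hγ hτ]; ring

lemma k1_eq2 (hγ : 1 < γ) (Ex : ℝ) :
    KcC K γ * (Ex * ((γ + 1) / (γ - 1)) * etaP K γ τ x t ^ ((γ + 1) / (γ - 1) - 1))
      = 2 * k1P K γ τ x t * Ex := by
  have hγ1 : γ - 1 ≠ 0 := by linarith
  have he : (γ + 1) / (γ - 1) - 1 = 2 / (γ - 1) := by field_simp; ring
  rw [he, k1P]; field_simp

lemma cP_k1 (hK : 0 < K) (hγ : 1 < γ) (hτ : 0 < τ x t) :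
    cP K γ τ x t = 2 * (γ - 1) / (γ + 1) * k1P K γ τ x t * etaP K γ τ x t := by
  have hγ1 : γ - 1 ≠ 0 := by linarith
  have hγ2 : γ + 1 ≠ 0 := by linarith
  have hE := eta_pos hK hγ hτ
  rw [cP_eq hK hγ hτ, k1P]
  have he : (γ + 1) / (γ - 1) = 2 / (γ - 1) + 1 := by field_simp; ring
  rw [he, Real.rpow_add hE, Real.rpow_one]
  field_simp

/-! ### Pointwise consequences of the PDE -/

lemma eta_pdt (hK : 0 < K) (hγ : 1 < γ) (hτ : 0 < τ x t)
    (hd : DifferentiableAt ℝ (fun q : ℝ × ℝ => τ q.1 q.2) (x, t))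
    (he : pdt τ x t = pdx u x t) :
    pdt (etaP K γ τ) x t = -(cP K γ τ x t * pdx u x t) := by
  have hγ1 : γ - 1 ≠ 0 := by linarith
  have hτt := hasDerivAt_pdt hd
  have h : HasDerivAt (fun s => etaP K γ τ x s)
      (2 * Real.sqrt (K * γ) / (γ - 1) *
        (pdt τ x t * (-(γ - 1) / 2) * τ x t ^ (-(γ - 1) / 2 - 1))) t :=
    (hτt.rpow_const (Or.inl hτ.ne')).const_mul _
  rw [show pdt (etaP K γ τ) x t = deriv (fun s => etaP K γ τ x s) t from rfl, h.deriv, he,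
    show -(γ - 1) / 2 - 1 = -(γ + 1) / 2 by ring, cP]
  field_simp

lemma eta_pdx (hK : 0 < K) (hγ : 1 < γ) (hτ : 0 < τ x t)
    (hd : DifferentiableAt ℝ (fun q : ℝ × ℝ => τ q.1 q.2) (x, t)) :
    pdx (etaP K γ τ) x t = -(cP K γ τ x t * pdx τ x t) := by
  have hγ1 : γ - 1 ≠ 0 := by linarith
  have hτx := hasDerivAt_pdx hd
  have h : HasDerivAt (fun y => etaP K γ τ y t)
      (2 * Real.sqrt (K * γ) / (γ - 1) *
        (pdx τ x t * (-(γ - 1) / 2) * τ x t ^ (-(γ - 1) / 2 - 1))) x :=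
    (hτx.rpow_const (Or.inl hτ.ne')).const_mul _
  rw [show pdx (etaP K γ τ) x t = deriv (fun y => etaP K γ τ y t) x from rfl, h.deriv,
    show -(γ - 1) / 2 - 1 = -(γ + 1) / 2 by ring, cP]
  field_simp

lemma m_pdt (hcv : 0 < cv)
    (hd : DifferentiableAt ℝ (fun q : ℝ × ℝ => S q.1 q.2) (x, t))
    (he : pdt S x t = 0) :
    pdt (mF cv S) x t = 0 := by
  have hSt := hasDerivAt_pdt hd
  have h : HasDerivAt (fun s => mF cv S x s)
      (Real.exp (S x t / (2 * cv)) * (pdt S x t / (2 * cv))) t := (hSt.div_const _).exp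
  rw [show pdt (mF cv S) x t = deriv (fun s => mF cv S x s) t from rfl, h.deriv, he]
  simp

lemma m_pdx (hcv : 0 < cv)
    (hd : DifferentiableAt ℝ (fun q : ℝ × ℝ => S q.1 q.2) (x, t)) :
    pdx (mF cv S) x t = mF cv S x t * pdx S x t / (2 * cv) := by
  have hSx := hasDerivAt_pdx hd
  have h : HasDerivAt (fun y => mF cv S y t)
      (Real.exp (S x t / (2 * cv)) * (pdx S x t / (2 * cv))) x := (hSx.div_const _).exp
  rw [show pdx (mF cv S) x t = deriv (fun y => mF cv S y t) x from rfl, h.deriv, mF]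
  ring

lemma u_pdt (hK : 0 < K) (hcv : 0 < cv) (hγ : 1 < γ) (hτ : 0 < τ x t)
    (hdτ : DifferentiableAt ℝ (fun q : ℝ × ℝ => τ q.1 q.2) (x, t))
    (hdS : DifferentiableAt ℝ (fun q : ℝ × ℝ => S q.1 q.2) (x, t))
    (he : pdt u x t + pdx (pF K cv γ τ S) x t = 0) :
    pdt u x t = -(cF K cv γ τ S x t *
      (mF cv S x t * pdx (etaP K γ τ) x t
        + (γ - 1) / γ * pdx (mF cv S) x t * etaP K γ τ x t)) := by
  have hγ1 : γ - 1 ≠ 0 := by linarith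
  have hγ0 : γ ≠ 0 := by linarith
  have hcv0 : cv ≠ 0 := hcv.ne'
  have hτx := hasDerivAt_pdx hdτ
  have hSx := hasDerivAt_pdx hdS
  have hexp : HasDerivAt (fun y => Real.exp (S y t / cv))
      (Real.exp (S x t / cv) * (pdx S x t / cv)) x := (hSx.div_const cv).exp
  have hpow : HasDerivAt (fun y => τ y t ^ (-γ))
      (pdx τ x t * (-γ) * τ x t ^ (-γ - 1)) x := hτx.rpow_const (Or.inl hτ.ne')
  have hpF : HasDerivAt (fun y => pF K cv γ τ S y t)
      (K * (Real.exp (S x t / cv) * (pdx S x t / cv)) * τ x t ^ (-γ)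
        + K * Real.exp (S x t / cv) * (pdx τ x t * (-γ) * τ x t ^ (-γ - 1))) x :=
    (hexp.const_mul K).mul hpow
  have hval : pdx (pF K cv γ τ S) x t
      = K * (Real.exp (S x t / cv) * (pdx S x t / cv)) * τ x t ^ (-γ)
        + K * Real.exp (S x t / cv) * (pdx τ x t * (-γ) * τ x t ^ (-γ - 1)) := hpF.deriv
  have hexp2 : Real.exp (S x t / cv) = mF cv S x t * mF cv S x t := by
    rw [mF, ← Real.exp_add]; congr 1; field_simp; ring
  have g1 : Real.sqrt (K * γ) * Real.sqrt (K * γ) *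
      (τ x t ^ (-(γ + 1) / 2) * τ x t ^ (-(γ + 1) / 2)) = K * γ * τ x t ^ (-γ - 1) := by
    rw [← Real.rpow_add hτ, show -(γ + 1) / 2 + -(γ + 1) / 2 = -γ - 1 by ring,
      Real.mul_self_sqrt (by positivity)]
  have g2 : Real.sqrt (K * γ) * Real.sqrt (K * γ) *
      (τ x t ^ (-(γ + 1) / 2) * τ x t ^ (-(γ - 1) / 2)) = K * γ * τ x t ^ (-γ) := by
    rw [← Real.rpow_add hτ, show -(γ + 1) / 2 + -(γ - 1) / 2 = -γ by ring,
      Real.mul_self_sqrt (by positivity)]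
  have hut : pdt u x t = -(K * (Real.exp (S x t / cv) * (pdx S x t / cv)) * τ x t ^ (-γ)
        + K * Real.exp (S x t / cv) * (pdx τ x t * (-γ) * τ x t ^ (-γ - 1))) := by
    rw [← hval]; linarith
  rw [hut, cF_eq hK hγ hτ, m_pdx hcv hdS, eta_pdx hK hγ hτ hdτ, hexp2, cP, etaP, mF]
  set m' := Real.exp (S x t / (2 * cv)) with hm'
  set sq := Real.sqrt (K * γ) with hsq
  set P1 := τ x t ^ (-γ) with hP1
  set P2 := τ x t ^ (-γ - 1) with hP2
  set P3 := τ x t ^ (-(γ + 1) / 2) with hP3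
  set P4 := τ x t ^ (-(γ - 1) / 2) with hP4
  set Tx := pdx τ x t with hTx
  set Sx := pdx S x t with hSx2
  field_simp
  linear_combination (-(m' ^ 2 * γ * cv * Tx)) * g1 +
    (m' ^ 2 * Sx) * g2

end Identities

/-- Riccati equations for the gradient variables of the full Euler equations. -/
theorem fullEuler_riccati_equations
    (K cv γ : ℝ) (hK : 0 < K) (hcv : 0 < cv) (hγ : 1 < γ)
    (Ω : Set (ℝ × ℝ)) (hΩ : IsOpen Ω)
    (u τ S : ℝ → ℝ → ℝ)
    (hu_reg : ContDiffOn ℝ 2 (fun p : ℝ × ℝ => u p.1 p.2) Ω)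
    (hτ_reg : ContDiffOn ℝ 2 (fun p : ℝ × ℝ => τ p.1 p.2) Ω)
    (hS_reg : ContDiffOn ℝ 2 (fun p : ℝ × ℝ => S p.1 p.2) Ω)
    (hτ_pos : ∀ p ∈ Ω, 0 < τ p.1 p.2)
    (hpde : ∀ p ∈ Ω, fullEuler K cv γ u τ S p.1 p.2) :
    ∀ p ∈ Ω,
      pdt (alphaF K cv γ u τ S) p.1 p.2 +
          cF K cv γ τ S p.1 p.2 * pdx (alphaF K cv γ u τ S) p.1 p.2 =
        k1P K γ τ p.1 p.2 *
          (k2F K cv γ τ S p.1 p.2 *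
              (3 * alphaF K cv γ u τ S p.1 p.2 + betaF K cv γ u τ S p.1 p.2) +
            alphaF K cv γ u τ S p.1 p.2 * betaF K cv γ u τ S p.1 p.2 -
            (alphaF K cv γ u τ S p.1 p.2) ^ 2) ∧
      pdt (betaF K cv γ u τ S) p.1 p.2 -
          cF K cv γ τ S p.1 p.2 * pdx (betaF K cv γ u τ S) p.1 p.2 =
        k1P K γ τ p.1 p.2 *
          (-(k2F K cv γ τ S p.1 p.2) *
              (alphaF K cv γ u τ S p.1 p.2 + 3 * betaF K cv γ u τ S p.1 p.2) +
            alphaF K cv γ u τ S p.1 p.2 * betaF K cv γ u τ S p.1 p.2 -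
            (betaF K cv γ u τ S p.1 p.2) ^ 2) := by
  intro p hp
  obtain ⟨x, t⟩ := p
  have hγ1 : γ - 1 ≠ 0 := by linarith
  have hγ0 : γ ≠ 0 := by linarith
  have hγ2 : γ + 1 ≠ 0 := by linarith
  have hT : 0 < τ x t := hτ_pos (x, t) hp
  have hEpos : 0 < etaP K γ τ x t := eta_pos hK hγ hT
  -- regularity of the derived fields
  have hEc : ContDiffOn ℝ 2 (fun q : ℝ × ℝ => etaP K γ τ q.1 q.2) Ω := by
    have h1 : ContDiffOn ℝ 2 (fun q : ℝ × ℝ => τ q.1 q.2 ^ (-(γ - 1) / 2)) Ω :=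
      hτ_reg.rpow_const_of_ne (fun q hq => (hτ_pos q hq).ne')
    exact contDiffOn_const.mul h1
  have hMc : ContDiffOn ℝ 2 (fun q : ℝ × ℝ => mF cv S q.1 q.2) Ω :=
    Real.contDiff_exp.comp_contDiffOn (hS_reg.div_const (2 * cv))
  -- pointwise differentiability
  have hdτ : ∀ y s, (y, s) ∈ Ω → DifferentiableAt ℝ (fun q : ℝ × ℝ => τ q.1 q.2) (y, s) :=
    fun y s h => (hτ_reg.contDiffAt (hΩ.mem_nhds h)).differentiableAt (by norm_num)
  have hdS : ∀ y s, (y, s) ∈ Ω → DifferentiableAt ℝ (fun q : ℝ × ℝ => S q.1 q.2) (y, s) :=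
    fun y s h => (hS_reg.contDiffAt (hΩ.mem_nhds h)).differentiableAt (by norm_num)
  have hdu : ∀ y s, (y, s) ∈ Ω → DifferentiableAt ℝ (fun q : ℝ × ℝ => u q.1 q.2) (y, s) :=
    fun y s h => (hu_reg.contDiffAt (hΩ.mem_nhds h)).differentiableAt (by norm_num)
  have hdE : ∀ y s, (y, s) ∈ Ω →
      DifferentiableAt ℝ (fun q : ℝ × ℝ => etaP K γ τ q.1 q.2) (y, s) :=
    fun y s h => (hEc.contDiffAt (hΩ.mem_nhds h)).differentiableAt (by norm_num)
  have hdM : ∀ y s, (y, s) ∈ Ω →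
      DifferentiableAt ℝ (fun q : ℝ × ℝ => mF cv S q.1 q.2) (y, s) :=
    fun y s h => (hMc.contDiffAt (hΩ.mem_nhds h)).differentiableAt (by norm_num)
  -- neighborhood identities
  have N1 : ∀ y s, (y, s) ∈ Ω →
      pdt (etaP K γ τ) y s = -(cP K γ τ y s * pdx u y s) := fun y s h =>
    eta_pdt hK hγ (hτ_pos (y, s) h) (hdτ y s h)
      (by have := (hpde (y, s) h).1; linarith)
  have N3 : ∀ y s, (y, s) ∈ Ω → pdt (mF cv S) y s = 0 := fun y s h =>
    m_pdt hcv (hdS y s h) (hpde (y, s) h).2.2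
  have N5 : ∀ y s, (y, s) ∈ Ω →
      pdt u y s = -(cF K cv γ τ S y s *
        (mF cv S y s * pdx (etaP K γ τ) y s
          + (γ - 1) / γ * pdx (mF cv S) y s * etaP K γ τ y s)) := fun y s h =>
    u_pdt hK hcv hγ (hτ_pos (y, s) h) (hdτ y s h) (hdS y s h) (hpde (y, s) h).2.1
  -- second-order derivatives at the point
  obtain ⟨Uxx, Uxt, hUxx_x, hUx_t, hUt_x⟩ := master_second_deriv hΩ hp hu_reg
  obtain ⟨Exx, Ext, hExx_x, hEx_t, hEt_x⟩ := master_second_deriv hΩ hp hEc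
  obtain ⟨Mxx, Mxt, hMxx_x, hMx_t, hMt_x⟩ := master_second_deriv hΩ hp hMc
  -- first-order slice derivatives at the point
  have hU_x : HasDerivAt (fun y => u y t) (pdx u x t) x := hasDerivAt_pdx (hdu x t hp)
  have hE_x : HasDerivAt (fun y => etaP K γ τ y t) (pdx (etaP K γ τ) x t) x :=
    hasDerivAt_pdx (hdE x t hp)
  have hM_x : HasDerivAt (fun y => mF cv S y t) (pdx (mF cv S) x t) x :=
    hasDerivAt_pdx (hdM x t hp)
  have hM_t : HasDerivAt (fun s => mF cv S x s) 0 t := by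
    have h := hasDerivAt_pdt (hdM x t hp)
    rwa [N3 x t hp] at h
  have hE_t : HasDerivAt (fun s => etaP K γ τ x s)
      (-(cP K γ τ x t * pdx u x t)) t := by
    have h := hasDerivAt_pdt (hdE x t hp)
    rwa [N1 x t hp] at h
  -- eventual membership along the horizontal slice
  have hevx : ∀ᶠ y in nhds x, (y, t) ∈ Ω := by
    have hc : ContinuousAt (fun y : ℝ => ((y, t) : ℝ × ℝ)) x :=
      (continuous_id.prodMk continuous_const).continuousAt
    exact hc.preimage_mem_nhds (hΩ.mem_nhds hp)
  -- x-derivative of cP along the slice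
  have hCP_x : HasDerivAt (fun y => cP K γ τ y t)
      (2 * k1P K γ τ x t * pdx (etaP K γ τ) x t) x := by
    have h0 : HasDerivAt (fun y => KcC K γ * etaP K γ τ y t ^ ((γ + 1) / (γ - 1)))
        (KcC K γ * (pdx (etaP K γ τ) x t * ((γ + 1) / (γ - 1)) *
          etaP K γ τ x t ^ ((γ + 1) / (γ - 1) - 1))) x :=
      (hE_x.rpow_const (Or.inl hEpos.ne')).const_mul _
    have heq : (fun y => cP K γ τ y t)
        =ᶠ[nhds x] (fun y => KcC K γ * etaP K γ τ y t ^ ((γ + 1) / (γ - 1))) := by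
      filter_upwards [hevx] with y hy using cP_eq hK hγ (hτ_pos (y, t) hy)
    have h1 := h0.congr_of_eventuallyEq heq
    rwa [k1_eq2 hγ (pdx (etaP K γ τ) x t)] at h1
  -- x-derivative of cF along the slice
  have hcF_x : HasDerivAt (fun y => cF K cv γ τ S y t)
      (pdx (mF cv S) x t * cP K γ τ x t
        + mF cv S x t * (2 * k1P K γ τ x t * pdx (etaP K γ τ) x t)) x := by
    have h0 : HasDerivAt (fun y => KcC K γ * mF cv S y t *
          etaP K γ τ y t ^ ((γ + 1) / (γ - 1)))
        (KcC K γ * pdx (mF cv S) x t * etaP K γ τ x t ^ ((γ + 1) / (γ - 1))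
          + KcC K γ * mF cv S x t * (pdx (etaP K γ τ) x t * ((γ + 1) / (γ - 1)) *
            etaP K γ τ x t ^ ((γ + 1) / (γ - 1) - 1))) x :=
      (hM_x.const_mul (KcC K γ)).mul (hE_x.rpow_const (Or.inl hEpos.ne'))
    have h1 : HasDerivAt (fun y => cF K cv γ τ S y t) _ x := h0
    rwa [show KcC K γ * pdx (mF cv S) x t * etaP K γ τ x t ^ ((γ + 1) / (γ - 1))
          + KcC K γ * mF cv S x t * (pdx (etaP K γ τ) x t * ((γ + 1) / (γ - 1)) *
            etaP K γ τ x t ^ ((γ + 1) / (γ - 1) - 1))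
        = pdx (mF cv S) x t * cP K γ τ x t
          + mF cv S x t * (2 * k1P K γ τ x t * pdx (etaP K γ τ) x t) by
      linear_combination (pdx (mF cv S) x t) * (cP_eq (τ := τ) hK hγ hT).symm
        + (mF cv S x t) * (k1_eq2 (τ := τ) hγ (pdx (etaP K γ τ) x t))] at h1
  -- identify the mixed second derivatives via the PDE
  have eqMxt : Mxt = 0 := by
    have h0 : HasDerivAt (fun y => pdt (mF cv S) y t) (0 : ℝ) x := by
      refine (hasDerivAt_const x (0 : ℝ)).congr_of_eventuallyEq ?_
      filter_upwards [hevx] with y hy using N3 y t hy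
    exact hMt_x.unique h0
  have eqExt : Ext = -(2 * k1P K γ τ x t * pdx (etaP K γ τ) x t * pdx u x t
      + cP K γ τ x t * Uxx) := by
    have h0 : HasDerivAt (fun y => -(cP K γ τ y t * pdx u y t))
        (-(2 * k1P K γ τ x t * pdx (etaP K γ τ) x t * pdx u x t
          + cP K γ τ x t * Uxx)) x := by
      exact (hCP_x.mul hUxx_x).neg
    refine hEt_x.unique (h0.congr_of_eventuallyEq ?_)
    filter_upwards [hevx] with y hy using N1 y t hy
  have hQ_x : HasDerivAt (fun y => mF cv S y t * pdx (etaP K γ τ) y t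
        + (γ - 1) / γ * pdx (mF cv S) y t * etaP K γ τ y t)
      (pdx (mF cv S) x t * pdx (etaP K γ τ) x t + mF cv S x t * Exx
        + ((γ - 1) / γ * Mxx * etaP K γ τ x t
          + (γ - 1) / γ * pdx (mF cv S) x t * pdx (etaP K γ τ) x t)) x := by
    exact (hM_x.mul hExx_x).add ((hMxx_x.const_mul ((γ - 1) / γ)).mul hE_x)
  have eqUxt : Uxt = -((pdx (mF cv S) x t * cP K γ τ x t
        + mF cv S x t * (2 * k1P K γ τ x t * pdx (etaP K γ τ) x t)) *
          (mF cv S x t * pdx (etaP K γ τ) x t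
            + (γ - 1) / γ * pdx (mF cv S) x t * etaP K γ τ x t)
      + cF K cv γ τ S x t *
          (pdx (mF cv S) x t * pdx (etaP K γ τ) x t + mF cv S x t * Exx
            + ((γ - 1) / γ * Mxx * etaP K γ τ x t
              + (γ - 1) / γ * pdx (mF cv S) x t * pdx (etaP K γ τ) x t))) := by
    have h0 := (hcF_x.mul hQ_x).neg
    refine hUt_x.unique (h0.congr_of_eventuallyEq ?_)
    filter_upwards [hevx] with y hy using N5 y t hy
  -- time derivatives of α and β at the point
  have hαt : HasDerivAt (fun s => alphaF K cv γ u τ S x s)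
      (Uxt + (0 * pdx (etaP K γ τ) x t + mF cv S x t * Ext)
        + ((γ - 1) / γ * Mxt * etaP K γ τ x t
          + (γ - 1) / γ * pdx (mF cv S) x t * -(cP K γ τ x t * pdx u x t))) t :=
    (hUx_t.add (hM_t.mul hEx_t)).add ((hMx_t.const_mul ((γ - 1) / γ)).mul hE_t)
  have hβt : HasDerivAt (fun s => betaF K cv γ u τ S x s)
      (Uxt - (0 * pdx (etaP K γ τ) x t + mF cv S x t * Ext)
        - ((γ - 1) / γ * Mxt * etaP K γ τ x t
          + (γ - 1) / γ * pdx (mF cv S) x t * -(cP K γ τ x t * pdx u x t))) t :=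
    (hUx_t.sub (hM_t.mul hEx_t)).sub ((hMx_t.const_mul ((γ - 1) / γ)).mul hE_t)
  -- space derivatives of α and β at the point
  have hαx : HasDerivAt (fun y => alphaF K cv γ u τ S y t)
      (Uxx + (pdx (mF cv S) x t * pdx (etaP K γ τ) x t + mF cv S x t * Exx)
        + ((γ - 1) / γ * Mxx * etaP K γ τ x t
          + (γ - 1) / γ * pdx (mF cv S) x t * pdx (etaP K γ τ) x t)) x :=
    (hUxx_x.add (hM_x.mul hExx_x)).add ((hMxx_x.const_mul ((γ - 1) / γ)).mul hE_x)
  have hβx : HasDerivAt (fun y => betaF K cv γ u τ S y t)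
      (Uxx - (pdx (mF cv S) x t * pdx (etaP K γ τ) x t + mF cv S x t * Exx)
        - ((γ - 1) / γ * Mxx * etaP K γ τ x t
          + (γ - 1) / γ * pdx (mF cv S) x t * pdx (etaP K γ τ) x t)) x :=
    (hUxx_x.sub (hM_x.mul hExx_x)).sub ((hMxx_x.const_mul ((γ - 1) / γ)).mul hE_x)
  have eαt : pdt (alphaF K cv γ u τ S) x t = _ := hαt.deriv
  have eβt : pdt (betaF K cv γ u τ S) x t = _ := hβt.deriv
  have eαx : pdx (alphaF K cv γ u τ S) x t = _ := hαx.deriv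
  have eβx : pdx (betaF K cv γ u τ S) x t = _ := hβx.deriv
  constructor
  · rw [eαt, eαx, cF_eq hK hγ hT, eqUxt, eqExt, eqMxt, cF_eq hK hγ hT,
      cP_k1 hK hγ hT]
    simp only [alphaF, betaF, k2F]
    field_simp
    ring
  · rw [eβt, eβx, cF_eq hK hγ hT, eqUxt, eqExt, eqMxt, cF_eq hK hγ hT,
      cP_k1 hK hγ hT]
    simp only [alphaF, betaF, k2F]
    field_simp
    ring
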